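/- Let m ≥ 4 and p ≥ 3 be integers and let G be a finite simple graph whose vertex set is partitioned into p parts V_1, …, V_p, each of size q, such that: (i) each induced subgraph G[V_i] is m-regular and m-connected; (ii) every vertex of V_i has exactly two neighbours of G outside V_i ('outside neighbours'), and these two outside neighbours lie in two distinct parts other than V_i; (iii) for any two distinct parts V_i and V_j the number of edges of G between V_i and V_j equals 2q/(p−1), and 2q/(p−1) ≥ m + 2. Let H be the subgraph of G induced on the union of l ≥ 2 of the parts, let x ∈ V(H) with degree d_H(x) = k in H, and let Y ⊆ V(H) \ {x} with |Y| = k such that |Y ∩ V_j| ≤ m for each part V_j contained in H. Then there exists a k-fan in H from x to Y. -/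

import Mathlib

open Set Classical


/-- A graph `G` is `k`-connected if it has more than `k` vertices and removing any set of
fewer than `k` vertices leaves a connected graph (equivalently, `κ(G) ≥ k`). -/
def IsKConnected {V : Type*} [Fintype V] (k : ℕ) (G : SimpleGraph V) : Prop :=
  k < Fintype.card V ∧ ∀ D : Set V, D.ncard < k → (G.induce Dᶜ).Connected

/-- A `k`-fan in `G` from `x` to `Y`: a family of `k` internally disjoint paths from `x`
ending at `k` distinct vertices of `Y`, none of whose internal vertices lies in `Y ∪ {x}`. -/
def IsFan {V : Type*} (G : SimpleGraph V) (k : ℕ) (x : V) (Y : Set V) : Prop :=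
  ∃ (y : Fin k → V) (P : ∀ i : Fin k, G.Walk x (y i)),
    Function.Injective y ∧ (∀ i, y i ∈ Y) ∧ (∀ i, (P i).IsPath) ∧
    (∀ i, ∀ v ∈ (P i).support, v ≠ x → v ≠ y i → v ∉ Y) ∧
    (∀ i j, i ≠ j → ∀ v, v ∈ (P i).support → v ∈ (P j).support → v = x)

namespace MengerAux



variable {V : Type*}

/-- `S` separates `A` from `B` in `G`: every `A`–`B` walk meets `S`. -/
def Sep (G : SimpleGraph V) (A B S : Set V) : Prop :=
  ∀ ⦃a⦄, a ∈ A → ∀ ⦃b⦄, b ∈ B → ∀ w : G.Walk a b, ∃ s ∈ S, s ∈ w.support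

/-- From a walk meeting `S`, extract an initial segment ending at its first `S`-vertex. -/
lemma exists_prefix_to_set {G : SimpleGraph V} {S : Set V} {a b : V} (W : G.Walk a b)
    (hS : ∃ s ∈ S, s ∈ W.support) :
    ∃ (s : V) (_ : s ∈ S) (W' : G.Walk a s),
      (∀ v ∈ W'.support, v ∈ S → v = s) ∧ (∀ e ∈ W'.edges, e ∈ W.edges) ∧
      (∀ v ∈ W'.support, v ∈ W.support) := by
  induction W with
  | nil =>
    obtain ⟨s, hs, hmem⟩ := hS
    simp only [SimpleGraph.Walk.support_nil, List.mem_singleton] at hmem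
    subst hmem
    exact ⟨s, hs, .nil, by simp, by simp, by simp⟩
  | @cons u v w h p ih =>
    by_cases hu : u ∈ S
    · exact ⟨u, hu, .nil, by simp +contextual, by simp, by simp⟩
    · obtain ⟨s, hs, hmem⟩ := hS
      have hmem' : s ∈ p.support := by
        rcases ((by simpa using hmem : s = u ∨ s ∈ p.support)) with h1 | h1
        · exact absurd (h1 ▸ hs) hu
        · exact h1
      obtain ⟨s', hs', W', hint, hedge, hsupp⟩ := ih ⟨s, hs, hmem'⟩
      refine ⟨s', hs', .cons h W', ?_, ?_, ?_⟩
      · intro x hx hxS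
        rcases (by simpa using hx : x = u ∨ x ∈ W'.support) with rfl | hx'
        · exact absurd hxS hu
        · exact hint x hx' hxS
      · intro e he
        rcases (by simpa using he : e = s(u, v) ∨ e ∈ W'.edges) with rfl | he'
        · simp
        · exact List.mem_cons_of_mem _ (hedge e he')
      · intro x hx
        rcases (by simpa using hx : x = u ∨ x ∈ W'.support) with rfl | hx'
        · simp
        · exact List.mem_cons_of_mem _ (hsupp x hx')

lemma walk_nil_of_no_edges {G : SimpleGraph V} (hG : G.edgeSet = ∅) {a b : V}
    (w : G.Walk a b) : a = b ∧ w.support = [a] := by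
  cases w with
  | nil => simp
  | cons h p => exact absurd (G.mem_edgeSet.mpr h) (by simp [hG])


variable {V : Type*}

def ctr (G : SimpleGraph V) (x y : V) : SimpleGraph V where
  Adj a b := a ≠ b ∧ a ≠ y ∧ b ≠ y ∧
    (G.Adj a b ∨ (a = x ∧ G.Adj y b) ∨ (b = x ∧ G.Adj a y))
  symm := ⟨by
    rintro a b ⟨h1, h2, h3, h4⟩
    refine ⟨h1.symm, h3, h2, ?_⟩
    rcases h4 with h | ⟨rfl, h⟩ | ⟨rfl, h⟩
    · exact Or.inl h.symm
    · exact Or.inr (Or.inr ⟨rfl, h.symm⟩)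
    · exact Or.inr (Or.inl ⟨rfl, h.symm⟩)⟩
  loopless := ⟨by rintro a ⟨h1, -⟩; exact h1 rfl⟩

noncomputable def cproj (x y : V) (v : V) : V := if v = y then x else v

noncomputable def emap (G : SimpleGraph V) (x y : V) : Sym2 V → Sym2 V :=
  Sym2.lift ⟨fun a b => if G.Adj a b then s(a,b) else if a = x then s(y,b)
      else if b = x then s(a,y) else s(a,b), by
    intro a b
    by_cases h : G.Adj a b
    · simp [h, h.symm, Sym2.eq_swap]
    · have h' : ¬ G.Adj b a := fun hh => h hh.symm
      by_cases ha : a = x <;> by_cases hb : b = x <;>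
        subst_vars <;> simp [h, h', Sym2.eq_swap, *]⟩

lemma emap_apply (G : SimpleGraph V) (x y a b : V) :
    emap G x y s(a,b) = if G.Adj a b then s(a,b) else if a = x then s(y,b)
      else if b = x then s(a,y) else s(a,b) := by
  simp [emap]

lemma emap_retract {G : SimpleGraph V} {x y a b : V} (h : (ctr G x y).Adj a b) :
    Sym2.map (cproj x y) (emap G x y s(a,b)) = s(a,b) := by
  obtain ⟨hab, hay, hby, hd⟩ := h
  rw [emap_apply]
  by_cases hr : G.Adj a b
  · rw [if_pos hr, Sym2.map_pair_eq, cproj, cproj, if_neg hay, if_neg hby]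
  · rcases hd with hr' | ⟨hax, h2⟩ | ⟨hbx, h2⟩
    · exact absurd hr' hr
    · rw [if_neg hr, if_pos hax, Sym2.map_pair_eq, cproj, cproj, if_pos rfl, if_neg hby, hax]
    · have hax : ¬ a = x := fun hh => hab (hh.trans hbx.symm)
      rw [if_neg hr, if_neg hax, if_pos hbx, Sym2.map_pair_eq, cproj, cproj, if_neg hay,
        if_pos rfl, hbx]

lemma emap_mem {G : SimpleGraph V} {x y : V} (hxy : G.Adj x y) {e : Sym2 V}
    (he : e ∈ (ctr G x y).edgeSet) : emap G x y e ∈ G.edgeSet \ {s(x,y)} := by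
  induction e with
  | _ a b =>
    obtain ⟨hab, hay, hby, hd⟩ := he
    replace hab : a ≠ b := hab
    replace hay : a ≠ y := hay
    replace hby : b ≠ y := hby
    rw [emap_apply]
    by_cases hr : G.Adj a b
    · rw [if_pos hr]
      refine ⟨by simpa using hr, ?_⟩
      simp only [mem_singleton_iff, Sym2.eq_iff]
      rintro (⟨h3, h4⟩ | ⟨h3, h4⟩)
      · exact hby h4
      · exact hay h3
    · rcases hd with hr' | ⟨hax, h2⟩ | ⟨hbx, h2⟩
      · exact absurd hr' hr
      · rw [if_neg hr, if_pos hax]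
        refine ⟨by simpa using h2, ?_⟩
        simp only [mem_singleton_iff, Sym2.eq_iff]
        rintro (⟨h3, h4⟩ | ⟨h3, h4⟩)
        · exact hby h4
        · exact hab (hax.trans h4.symm)
      · have hax : ¬ a = x := fun hh => hab (hh.trans hbx.symm)
        rw [if_neg hr, if_neg hax, if_pos hbx]
        refine ⟨by simpa using h2, ?_⟩
        simp only [mem_singleton_iff, Sym2.eq_iff]
        rintro (⟨h3, h4⟩ | ⟨h3, h4⟩)
        · exact hax h3
        · exact hay h3

lemma ctr_edge_lt [Fintype V] {G : SimpleGraph V} {x y : V} (hxy : G.Adj x y) :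
    (ctr G x y).edgeSet.ncard < G.edgeSet.ncard := by
  have hinj : InjOn (emap G x y) (ctr G x y).edgeSet := by
    intro e₁ h₁ e₂ h₂ heq
    have r₁ : Sym2.map (cproj x y) (emap G x y e₁) = e₁ := by
      induction e₁ with
      | _ a b => exact emap_retract h₁
    have r₂ : Sym2.map (cproj x y) (emap G x y e₂) = e₂ := by
      induction e₂ with
      | _ a b => exact emap_retract h₂
    rw [← r₁, ← r₂, heq]
  calc (ctr G x y).edgeSet.ncard = (emap G x y '' (ctr G x y).edgeSet).ncard :=
        (Set.ncard_image_of_injOn hinj).symm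
    _ ≤ (G.edgeSet \ {s(x,y)}).ncard := by
        apply Set.ncard_le_ncard _ ((G.edgeSet \ {s(x,y)}).toFinite)
        rintro e ⟨e', he', rfl⟩
        exact emap_mem hxy he'
    _ < G.edgeSet.ncard :=
        Set.ncard_diff_singleton_lt_of_mem (G.mem_edgeSet.mpr hxy) (G.edgeSet.toFinite)

lemma cproj_ne_y {x y : V} (hxy : x ≠ y) (v : V) : cproj x y v ≠ y := by
  unfold cproj; split
  · exact hxy
  · assumption

lemma exists_projWalk {G : SimpleGraph V} {x y : V} (hxy : G.Adj x y) :
    ∀ {u v : V} (w : G.Walk u v), ∃ W' : (ctr G x y).Walk (cproj x y u) (cproj x y v),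
      ∀ s ∈ W'.support, ∃ t ∈ w.support, cproj x y t = s := by
  intro u v w
  induction w with
  | nil => exact ⟨.nil, by simp⟩
  | @cons u c v h p ih =>
    obtain ⟨W', hW'⟩ := ih
    by_cases hd : cproj x y u = cproj x y c
    · refine ⟨W'.copy hd.symm rfl, ?_⟩
      intro s hs
      rw [SimpleGraph.Walk.support_copy] at hs
      obtain ⟨t, ht, h3⟩ := hW' s hs
      exact ⟨t, by simp [ht], h3⟩
    · have hadj : (ctr G x y).Adj (cproj x y u) (cproj x y c) := by
        refine ⟨hd, cproj_ne_y hxy.ne u, cproj_ne_y hxy.ne c, ?_⟩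
        by_cases huy : u = y
        · have hcy : c ≠ y := fun hh => G.loopless.irrefl _ (huy ▸ hh ▸ h)
          have h1 : cproj x y u = x := by simp [cproj, huy]
          have h2 : cproj x y c = c := by simp [cproj, hcy]
          exact Or.inr (Or.inl ⟨h1, by rw [h2]; exact huy ▸ h⟩)
        · by_cases hcy : c = y
          · have h1 : cproj x y c = x := by simp [cproj, hcy]
            have h2 : cproj x y u = u := by simp [cproj, huy]
            exact Or.inr (Or.inr ⟨h1, by rw [h2]; exact hcy ▸ h⟩)
          · have h1 : cproj x y c = c := by simp [cproj, hcy]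
            have h2 : cproj x y u = u := by simp [cproj, huy]
            exact Or.inl (by rw [h1, h2]; exact h)
      refine ⟨.cons hadj W', ?_⟩
      intro s hs
      rcases (by simpa using hs : s = cproj x y u ∨ s ∈ W'.support) with rfl | hs'
      · exact ⟨u, by simp, rfl⟩
      · obtain ⟨t, ht, h3⟩ := hW' s hs'
        exact ⟨t, by simp [ht], h3⟩

lemma exists_liftWalk {G : SimpleGraph V} {x y : V} (hxy : G.Adj x y) :
    ∀ {u v : V} (W : (ctr G x y).Walk u v), ∃ W' : G.Walk u v,
      (∀ s ∈ W'.support, s ∈ W.support ∨ s = y) ∧ (y ∈ W'.support → x ∈ W.support ∨ y ∈ W.support) := by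
  intro u v W
  induction W with
  | nil => exact ⟨.nil, by simp, by simp +contextual⟩
  | @cons u c v h p ih =>
    obtain ⟨W', hW', hWy⟩ := ih
    obtain ⟨hne, huy, hcy, hd⟩ := id h
    by_cases hr : G.Adj u c
    · refine ⟨.cons hr W', ?_, ?_⟩
      · intro s hs
        rcases (by simpa using hs : s = u ∨ s ∈ W'.support) with rfl | hs'
        · exact Or.inl (by simp)
        · rcases hW' s hs' with h1 | h1
          · exact Or.inl (by simp [h1])
          · exact Or.inr h1
      · intro hy
        rcases (by simpa using hy : y = u ∨ y ∈ W'.support) with h1 | h1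
        · exact absurd h1.symm huy
        · rcases hWy h1 with h2 | h2
          · exact Or.inl (by simp [h2])
          · exact Or.inr (by simp [h2])
    · have hcase : (u = x ∧ G.Adj y c) ∨ (c = x ∧ G.Adj u y) := by
        rcases hd with h1 | h1 | h1
        · exact absurd h1 hr
        · exact Or.inl h1
        · exact Or.inr h1
      rcases hcase with ⟨hux, h2⟩ | ⟨hcx, h2⟩
      · refine ⟨.cons (hux ▸ hxy : G.Adj u y) (.cons h2 W'), ?_, ?_⟩
        · intro s hs
          rcases (by simpa using hs : s = u ∨ s = y ∨ s ∈ W'.support) with rfl | rfl | hs'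
          · exact Or.inl (by simp)
          · exact Or.inr rfl
          · rcases hW' s hs' with h1 | h1
            · exact Or.inl (by simp [h1])
            · exact Or.inr h1
        · intro _
          exact Or.inl (by simp [← hux])
      · refine ⟨.cons h2 (.cons (hcx ▸ hxy.symm : G.Adj y c) W'), ?_, ?_⟩
        · intro s hs
          rcases (by simpa using hs : s = u ∨ s = y ∨ s ∈ W'.support) with rfl | rfl | hs'
          · exact Or.inl (by simp)
          · exact Or.inr rfl
          · rcases hW' s hs' with h1 | h1
            · exact Or.inl (by simp [h1])
            · exact Or.inr h1
        · intro _
          have : x ∈ p.support := by simp [← hcx]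
          exact Or.inl (by simp [this])


lemma end_not_mem_takeUntil [DecidableEq V] {G : SimpleGraph V} {a b v : V} {p : G.Walk a b}
    (hp : p.IsPath) (hv : v ∈ p.support) (hvb : v ≠ b) : b ∉ (p.takeUntil v hv).support := by
  intro hb
  have hspec := p.take_spec hv
  have hnd : p.support.Nodup := hp.support_nodup
  rw [← hspec, SimpleGraph.Walk.support_append] at hnd
  have hdisj := List.disjoint_of_nodup_append hnd
  have hbd : b ∈ (p.dropUntil v hv).support := SimpleGraph.Walk.end_mem_support _
  have hL := SimpleGraph.Walk.support_eq_cons (p.dropUntil v hv)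
  rw [hL] at hbd
  rcases List.mem_cons.mp hbd with h1 | h1
  · exact hvb h1.symm
  · have : b ∈ ((p.dropUntil v hv).support).tail := by rw [hL]; exact h1
    exact hdisj hb this

lemma start_not_mem_dropUntil [DecidableEq V] {G : SimpleGraph V} {a b v : V} {p : G.Walk a b}
    (hp : p.IsPath) (hv : v ∈ p.support) : a ∉ ((p.dropUntil v hv).support).tail := by
  intro ha
  have hspec := p.take_spec hv
  have hnd : p.support.Nodup := hp.support_nodup
  rw [← hspec, SimpleGraph.Walk.support_append] at hnd
  exact (List.disjoint_of_nodup_append hnd) (SimpleGraph.Walk.start_mem_support _) ha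

lemma isPath_append {G : SimpleGraph V} {a b c : V} {p : G.Walk a b} {q : G.Walk b c}
    (hp : p.IsPath) (hq : q.IsPath) (hint : ∀ v, v ∈ p.support → v ∈ q.support → v = b) :
    (p.append q).IsPath := by
  rw [SimpleGraph.Walk.isPath_def, SimpleGraph.Walk.support_append, List.nodup_append]
  refine ⟨hp.support_nodup, (List.tail_sublist _).nodup hq.support_nodup, ?_⟩
  intro v hv1 w hv2 hvw
  subst hvw
  have hvq : v ∈ q.support := List.mem_of_mem_tail hv2
  have hvb : v = b := hint v hv1 hvq
  subst hvb
  have hL := SimpleGraph.Walk.support_eq_cons q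
  have hnd := hq.support_nodup
  rw [hL] at hnd hv2
  exact (List.nodup_cons.mp hnd).1 (by simpa using hv2)

lemma y_not_mem_ctr_walk {G : SimpleGraph V} {x y : V} : ∀ {u v : V} (W : (ctr G x y).Walk u v),
    u ≠ y → y ∉ W.support := by
  intro u v W
  induction W with
  | nil => intro h; simpa using fun hh => h hh.symm
  | @cons u c v h p ih =>
    intro hu
    have hc : c ≠ y := h.2.2.1
    intro hmem
    rcases (by simpa using hmem : y = u ∨ y ∈ p.support) with h1 | h1
    · exact hu h1.symm
    · exact ih hc h1

lemma mem_support_of_eq {G : SimpleGraph V} {u v w : V} (p : G.Walk u v) (h : u = w) :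
    w ∈ p.support := by subst h; exact p.start_mem_support

lemma end_mem_support_of_eq {G : SimpleGraph V} {u v w : V} (p : G.Walk u v) (h : v = w) :
    w ∈ p.support := by subst h; exact p.end_mem_support

/-- Menger's theorem (fully disjoint A–B path systems), by induction on the number of edges. -/
theorem menger [Fintype V] : ∀ (n : ℕ) (G : SimpleGraph V), G.edgeSet.ncard = n →
    ∀ (A B : Set V) (k : ℕ), (∀ S : Set V, Sep G A B S → k ≤ S.ncard) →
    ∃ (a b : Fin k → V) (P : ∀ i, G.Walk (a i) (b i)),
      (∀ i, a i ∈ A) ∧ (∀ i, b i ∈ B) ∧ (∀ i, (P i).IsPath) ∧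
      (∀ i j, i ≠ j → ∀ v, v ∈ (P i).support → v ∈ (P j).support → False) := by
  intro n
  induction n using Nat.strong_induction_on with
  | _ n ih =>
  intro G hn A B k hsep
  classical
  rcases Nat.eq_zero_or_pos n with rfl | hpos
  · -- base case : no edges
    have hE : G.edgeSet = ∅ := by
      rw [← Set.ncard_eq_zero (G.edgeSet.toFinite)]; exact hn
    have hAB : k ≤ (A ∩ B).ncard := by
      apply hsep
      intro a ha b hb w
      obtain ⟨rfl, hsupp⟩ := walk_nil_of_no_edges hE w
      exact ⟨a, ⟨ha, hb⟩, by simp [hsupp]⟩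
    have hle : k ≤ (A ∩ B).toFinset.card := by
      rwa [← Set.ncard_eq_toFinset_card'] at *
    obtain ⟨T, hT, hTcard⟩ := Finset.exists_subset_card_eq hle
    have hfmem : ∀ i : Fin k, ((T.equivFin.symm (Fin.cast hTcard.symm i)).1 : V) ∈ A ∩ B := by
      intro i
      have := (T.equivFin.symm (Fin.cast hTcard.symm i)).2
      have hmem := hT this
      rwa [Set.mem_toFinset] at hmem
    have hfinj : ∀ i j : Fin k,
        ((T.equivFin.symm (Fin.cast hTcard.symm i)).1 : V) =
        ((T.equivFin.symm (Fin.cast hTcard.symm j)).1 : V) → i = j := by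
      intro i j hij
      have : T.equivFin.symm (Fin.cast hTcard.symm i) = T.equivFin.symm (Fin.cast hTcard.symm j) :=
        Subtype.ext hij
      simpa [Fin.ext_iff] using T.equivFin.symm.injective this
    refine ⟨fun i => (T.equivFin.symm (Fin.cast hTcard.symm i)).1,
      fun i => (T.equivFin.symm (Fin.cast hTcard.symm i)).1,
      fun i => SimpleGraph.Walk.nil, fun i => (hfmem i).1, fun i => (hfmem i).2,
      fun i => SimpleGraph.Walk.IsPath.nil, ?_⟩
    intro i j hij v hvi hvj
    simp only [SimpleGraph.Walk.support_nil, List.mem_singleton] at hvi hvj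
    exact hij (hfinj i j (hvi ▸ hvj ▸ rfl))
  · -- inductive step
    have hne : ∃ x y : V, G.Adj x y := by
      have hne' : G.edgeSet.Nonempty := by
        rw [Set.nonempty_iff_ne_empty]
        intro hE
        rw [hE] at hn
        simp at hn
        omega
      obtain ⟨e, he⟩ := hne'
      revert he
      refine Sym2.ind (fun x y he => ⟨x, y, he⟩) e
    obtain ⟨x, y, hxy⟩ := hne
    by_cases hY : ∀ S' : Set V, Sep (ctr G x y) (cproj x y '' A) (cproj x y '' B) S' →
        k ≤ S'.ncard
    · -- lift case
      obtain ⟨a', b', P', ha', hb', hP', hdisj'⟩ :=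
        ih (ctr G x y).edgeSet.ncard (hn ▸ ctr_edge_lt hxy) (ctr G x y) rfl _ _ k hY
      have hyA' : ∀ s ∈ cproj x y '' A, s ≠ y := by
        rintro s ⟨t, ht, rfl⟩; exact cproj_ne_y hxy.ne t
      have hynot : ∀ i, y ∉ (P' i).support :=
        fun i => y_not_mem_ctr_walk _ (hyA' _ (ha' i))
      have hlift : ∀ i : Fin k, ∃ (ai bi : V) (Q : G.Walk ai bi), ai ∈ A ∧ bi ∈ B ∧ Q.IsPath ∧
          (∀ s ∈ Q.support, s ∈ (P' i).support ∨ s = y) ∧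
          (y ∈ Q.support → x ∈ (P' i).support) := by
        intro i
        obtain ⟨W₁, hW₁s, hW₁y⟩ := exists_liftWalk hxy (P' i)
        obtain ⟨wa, hwa, hwa'⟩ := ha' i
        obtain ⟨wb, hwb, hwb'⟩ := hb' i
        have hW₁y' : y ∈ W₁.support → x ∈ (P' i).support := by
          intro hy
          rcases hW₁y hy with h1 | h1
          · exact h1
          · exact absurd h1 (hynot i)
        by_cases hway : wa = y <;> by_cases hwby : wb = y
        · -- both endpoints were y : use the trivial walk at y
          refine ⟨y, y, SimpleGraph.Walk.nil, hway ▸ hwa, hwby ▸ hwb, SimpleGraph.Walk.IsPath.nil,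
            ?_, ?_⟩
          · intro s hs
            exact Or.inr (by simpa using hs)
          · intro _
            have hax : a' i = x := by rw [← hwa', hway]; simp [cproj]
            exact mem_support_of_eq (P' i) hax
        · -- start fix only
          have hax : a' i = x := by rw [← hwa', hway]; simp [cproj]
          have hbb : b' i = wb := by rw [← hwb', cproj]; simp [hwby]
          refine ⟨y, b' i, (SimpleGraph.Walk.cons hxy.symm (W₁.copy hax rfl)).toPath.1,
            hway ▸ hwa,
            hbb ▸ hwb, (SimpleGraph.Walk.cons hxy.symm (W₁.copy hax rfl)).toPath.2, ?_, ?_⟩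
          · intro s hs
            have hs' := SimpleGraph.Walk.support_toPath_subset _ hs
            rcases (by simpa [SimpleGraph.Walk.support_copy] using hs' :
                s = y ∨ s ∈ W₁.support) with rfl | hs''
            · exact Or.inr rfl
            · exact hW₁s s hs''
          · intro _
            exact mem_support_of_eq (P' i) hax
        · -- end fix only
          have hbx : b' i = x := by rw [← hwb', hwby]; simp [cproj]
          have haa : a' i = wa := by rw [← hwa', cproj]; simp [hway]
          refine ⟨a' i, y,
            ((W₁.copy rfl hbx).append (SimpleGraph.Walk.cons hxy SimpleGraph.Walk.nil)).toPath.1,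
            haa ▸ hwa, hwby ▸ hwb,
            ((W₁.copy rfl hbx).append (SimpleGraph.Walk.cons hxy SimpleGraph.Walk.nil)).toPath.2,
            ?_, ?_⟩
          · intro s hs
            have hs' := SimpleGraph.Walk.support_toPath_subset _ hs
            rw [SimpleGraph.Walk.mem_support_append_iff] at hs'
            rcases hs' with h1 | h1
            · exact hW₁s s (by simpa [SimpleGraph.Walk.support_copy] using h1)
            · rcases (by simpa using h1 : s = x ∨ s = y) with rfl | rfl
              · exact Or.inl (end_mem_support_of_eq (P' i) hbx)
              · exact Or.inr rfl
          · intro _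
            exact end_mem_support_of_eq (P' i) hbx
        · -- no fix
          have haa : a' i = wa := by rw [← hwa', cproj]; simp [hway]
          have hbb : b' i = wb := by rw [← hwb', cproj]; simp [hwby]
          refine ⟨a' i, b' i, W₁.toPath.1, haa ▸ hwa, hbb ▸ hwb, W₁.toPath.2, ?_, ?_⟩
          · intro s hs
            exact hW₁s s (SimpleGraph.Walk.support_toPath_subset _ hs)
          · intro hy
            exact hW₁y' (SimpleGraph.Walk.support_toPath_subset _ hy)
      choose af bf Q hA hB hQp hQs hQy using hlift
      refine ⟨af, bf, Q, hA, hB, hQp, ?_⟩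
      intro i j hij v hvi hvj
      by_cases hvy : v = y
      · subst hvy
        exact hdisj' i j hij x (hQy i hvi) (hQy j hvj)
      · rcases hQs i v hvi with h1 | h1
        · rcases hQs j v hvj with h2 | h2
          · exact hdisj' i j hij v h1 h2
          · exact hvy h2
        · exact hvy h1
    · -- separator case
      push_neg at hY
      obtain ⟨S₀, hSep₀, hcard₀⟩ := hY
      have hyA' : ∀ s ∈ cproj x y '' A, s ≠ y := by
        rintro s ⟨t, ht, rfl⟩; exact cproj_ne_y hxy.ne t
      have hSepT : Sep (ctr G x y) (cproj x y '' A) (cproj x y '' B) (S₀ \ {y}) := by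
        intro a' ha' b' hb' w
        obtain ⟨s, hs, hmem⟩ := hSep₀ ha' hb' w
        refine ⟨s, ⟨hs, ?_⟩, hmem⟩
        simp only [mem_singleton_iff]
        rintro rfl
        exact y_not_mem_ctr_walk w (hyA' _ ha') hmem
      have hTle : (S₀ \ {y}).ncard < k :=
        lt_of_le_of_lt (Set.ncard_le_ncard diff_subset S₀.toFinite) hcard₀
      have hxT : x ∈ S₀ \ {y} := by
        by_contra hxT
        have hsepG : Sep G A B (S₀ \ {y}) := by
          intro a ha b hb w
          obtain ⟨W', hW'⟩ := exists_projWalk hxy w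
          obtain ⟨s, hs, hmem⟩ := hSepT (mem_image_of_mem _ ha) (mem_image_of_mem _ hb) W'
          obtain ⟨t, ht, rfl⟩ := hW' s hmem
          by_cases hty : t = y
          · rw [hty] at hs
            simp only [cproj, if_pos rfl] at hs
            exact absurd hs hxT
          · simp only [cproj, if_neg hty] at hs ⊢
            exact ⟨t, hs, ht⟩
        exact absurd (hsep _ hsepG) (not_le.mpr hTle)
      set T : Set V := S₀ \ {y} with hT
      set S : Set V := T ∪ {y} with hS
      have hxS : x ∈ S := Or.inl hxT
      have hyS : y ∈ S := Or.inr rfl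
      have hSepS : Sep G A B S := by
        intro a ha b hb w
        obtain ⟨W', hW'⟩ := exists_projWalk hxy w
        obtain ⟨s, hs, hmem⟩ := hSepT (mem_image_of_mem _ ha) (mem_image_of_mem _ hb) W'
        obtain ⟨t, ht, rfl⟩ := hW' s hmem
        by_cases hty : t = y
        · exact ⟨t, hty ▸ hyS, ht⟩
        · simp only [cproj, if_neg hty] at hs
          exact ⟨t, Or.inl hs, ht⟩
      have hScard : S.ncard = k := by
        have h1 : k ≤ S.ncard := hsep _ hSepS
        have h2 : S.ncard ≤ T.ncard + 1 := by
          refine le_trans (Set.ncard_union_le _ _) (by simp)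
        omega
      have hein : s(x, y) ∈ G.edgeSet := G.mem_edgeSet.mpr hxy
      have hGmedge : (G.deleteEdges {s(x, y)}).edgeSet = G.edgeSet \ {s(x, y)} :=
        SimpleGraph.edgeSet_deleteEdges _
      have hGmlt : (G.deleteEdges {s(x, y)}).edgeSet.ncard < n := by
        rw [hGmedge, ← hn]
        exact Set.ncard_diff_singleton_lt_of_mem hein G.edgeSet.toFinite
      set Gm := G.deleteEdges {s(x, y)} with hGm
      have hGmle : ∀ {u v : V} (w : Gm.Walk u v) (e : Sym2 V), e ∈ w.edges → e ∈ G.edgeSet :=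
        fun w e he => (SimpleGraph.edgeSet_mono (SimpleGraph.deleteEdges_le _))
          (SimpleGraph.Walk.edges_subset_edgeSet w he)
      -- prefixes avoiding the deleted edge
      have hprefix : ∀ {a b : V} (w : G.Walk a b), (∃ s ∈ S, s ∈ w.support) →
          ∃ (s : V) (_ : s ∈ S) (W' : Gm.Walk a s),
            (∀ v ∈ W'.support, v ∈ S → v = s) ∧ (∀ v ∈ W'.support, v ∈ w.support) := by
        intro a b w hhit
        obtain ⟨s, hsS, W', hint, hedges, hsupp⟩ := exists_prefix_to_set w hhit
        have hWe : ∀ e ∈ W'.edges, e ∈ Gm.edgeSet := by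
          intro e he
          rw [hGm, hGmedge]
          refine ⟨SimpleGraph.Walk.edges_subset_edgeSet W' he, ?_⟩
          simp only [mem_singleton_iff]
          rintro rfl
          have hx' : x ∈ W'.support := W'.fst_mem_support_of_mem_edges he
          have hy' : y ∈ W'.support := W'.snd_mem_support_of_mem_edges he
          exact hxy.ne ((hint x hx' hxS).trans (hint y hy' hyS).symm)
        refine ⟨s, hsS, W'.transfer Gm hWe, ?_, ?_⟩
        · intro v hv
          rw [SimpleGraph.Walk.support_transfer] at hv
          exact hint v hv
        · intro v hv
          rw [SimpleGraph.Walk.support_transfer] at hv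
          exact hsupp v hv
      have hML : ∀ T' : Set V, Sep Gm A S T' → k ≤ T'.ncard := by
        intro T' hT'
        apply hsep
        intro a ha b hb w
        obtain ⟨s, hsS, W'', hint, hsupp⟩ := hprefix w (hSepS ha hb w)
        obtain ⟨t, htT, htmem⟩ := hT' ha hsS W''
        exact ⟨t, htT, hsupp t htmem⟩
      have hMR : ∀ T' : Set V, Sep Gm S B T' → k ≤ T'.ncard := by
        intro T' hT'
        apply hsep
        intro a ha b hb w
        have hhit : ∃ s ∈ S, s ∈ w.reverse.support := by
          obtain ⟨s, h1, h2⟩ := hSepS ha hb w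
          exact ⟨s, h1, by simpa using h2⟩
        obtain ⟨s, hsS, W'', hint, hsupp⟩ := hprefix w.reverse hhit
        obtain ⟨t, htT, htmem⟩ := hT' hsS hb W''.reverse
        have htmem' : t ∈ W''.support := by
          rw [SimpleGraph.Walk.support_reverse] at htmem
          simpa using htmem
        have := hsupp t htmem'
        rw [SimpleGraph.Walk.support_reverse] at this
        exact ⟨t, htT, by simpa using this⟩
      obtain ⟨a₁, s₁, Q₁, hQ₁A, hQ₁S, hQ₁p, hQ₁d⟩ := ih _ hGmlt Gm rfl A S k hML
      obtain ⟨s₂, b₂, Q₂, hQ₂S, hQ₂B, hQ₂p, hQ₂d⟩ := ih _ hGmlt Gm rfl S B k hMR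
      -- trim the left system at its first S-vertex
      have htrimL : ∀ i : Fin k, ∃ (si : V) (_ : si ∈ S) (QL : Gm.Walk (a₁ i) si),
          QL.IsPath ∧ (∀ v ∈ QL.support, v ∈ S → v = si) ∧
          (∀ v ∈ QL.support, v ∈ (Q₁ i).support) := by
        intro i
        obtain ⟨s, hsS, W', hint, hedges, hsupp⟩ := exists_prefix_to_set (Q₁ i)
          ⟨s₁ i, hQ₁S i, SimpleGraph.Walk.end_mem_support _⟩
        refine ⟨s, hsS, W'.toPath.1, W'.toPath.2, ?_, ?_⟩
        · intro v hv hvS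
          exact hint v (SimpleGraph.Walk.support_toPath_subset _ hv) hvS
        · intro v hv
          exact hsupp v (SimpleGraph.Walk.support_toPath_subset _ hv)
      choose sL hSL QL hpL hintL hsubL using htrimL
      have htrimR : ∀ i : Fin k, ∃ (ti : V) (_ : ti ∈ S) (QR : Gm.Walk ti (b₂ i)),
          QR.IsPath ∧ (∀ v ∈ QR.support, v ∈ S → v = ti) ∧
          (∀ v ∈ QR.support, v ∈ (Q₂ i).support) := by
        intro i
        obtain ⟨s, hsS, W', hint, hedges, hsupp⟩ := exists_prefix_to_set (Q₂ i).reverse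
          ⟨s₂ i, hQ₂S i, by simpa using SimpleGraph.Walk.start_mem_support (Q₂ i)⟩
        refine ⟨s, hsS, W'.reverse.toPath.1, W'.reverse.toPath.2, ?_, ?_⟩
        · intro v hv hvS
          have hv' := SimpleGraph.Walk.support_toPath_subset _ hv
          rw [SimpleGraph.Walk.support_reverse] at hv'
          exact hint v (by simpa using hv') hvS
        · intro v hv
          have hv' := SimpleGraph.Walk.support_toPath_subset _ hv
          rw [SimpleGraph.Walk.support_reverse] at hv'
          have := hsupp v (by simpa using hv')
          rw [SimpleGraph.Walk.support_reverse] at this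
          simpa using this
      choose tR hSR QR hpR hintR hsubR using htrimR
      -- the S-endpoints enumerate S bijectively
      haveI : Fintype ↥S := S.toFinite.fintype
      have hcardS : Fintype.card ↥S = k := by
        rw [← Nat.card_eq_fintype_card, Nat.card_coe_set_eq, hScard]
      have hinjL : Function.Injective (fun i : Fin k => (⟨sL i, hSL i⟩ : ↥S)) := by
        intro i j hij
        by_contra hne'
        refine hQ₁d i j hne' (sL i) ?_ ?_
        · exact hsubL i _ (SimpleGraph.Walk.end_mem_support _)
        · have : sL i = sL j := congrArg Subtype.val hij
          rw [this]
          exact hsubL j _ (SimpleGraph.Walk.end_mem_support _)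
      have hinjR : Function.Injective (fun i : Fin k => (⟨tR i, hSR i⟩ : ↥S)) := by
        intro i j hij
        by_contra hne'
        refine hQ₂d i j hne' (tR i) ?_ ?_
        · exact hsubR i _ (SimpleGraph.Walk.start_mem_support _)
        · have : tR i = tR j := congrArg Subtype.val hij
          rw [this]
          exact hsubR j _ (SimpleGraph.Walk.start_mem_support _)
      have hbijL : Function.Bijective (fun i : Fin k => (⟨sL i, hSL i⟩ : ↥S)) := by
        rw [Fintype.bijective_iff_injective_and_card]
        exact ⟨hinjL, by simp [hcardS]⟩
      have hbijR : Function.Bijective (fun i : Fin k => (⟨tR i, hSR i⟩ : ↥S)) := by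
        rw [Fintype.bijective_iff_injective_and_card]
        exact ⟨hinjR, by simp [hcardS]⟩
      set eL := Equiv.ofBijective _ hbijL with heL
      set eR := Equiv.ofBijective _ hbijR with heR
      set σ : Fin k → Fin k := fun i => eR.symm (eL i) with hσ
      have hσinj : Function.Injective σ := fun i j hij =>
        eL.injective (eR.symm.injective hij)
      have hmatch : ∀ i, tR (σ i) = sL i := by
        intro i
        have : eR (eR.symm (eL i)) = eL i := eR.apply_symm_apply _
        have h2 := congrArg Subtype.val this
        exact h2
      -- key disjointness between left and right pieces
      have key : ∀ i j (v : V), v ∈ (QL i).support → v ∈ (QR j).support →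
          v = sL i ∧ v = tR j := by
        intro i j v hvi hvj
        by_cases hvS : v ∈ S
        · exact ⟨hintL i v hvi hvS, hintR j v hvj hvS⟩
        · exfalso
          set W : Gm.Walk (a₁ i) (b₂ j) :=
            ((QL i).takeUntil v hvi).append ((QR j).dropUntil v hvj) with hW
          have hWe : ∀ e ∈ W.edges, e ∈ G.edgeSet := fun e he => hGmle W e he
          obtain ⟨s, hsS, hsmem⟩ := hSepS (hQ₁A i) (hQ₂B j) (W.transfer G hWe)
          rw [SimpleGraph.Walk.support_transfer, hW,
            SimpleGraph.Walk.mem_support_append_iff] at hsmem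
          rcases hsmem with h1 | h1
          · have hs' : s = sL i := hintL i s (SimpleGraph.Walk.support_takeUntil_subset _ _ h1) hsS
            have hvne : v ≠ sL i := fun hh => hvS (hh ▸ hSL i)
            exact end_not_mem_takeUntil (hpL i) hvi hvne (hs' ▸ h1)
          · have hs' : s = tR j := hintR j s (SimpleGraph.Walk.support_dropUntil_subset _ _ h1) hsS
            have hL := SimpleGraph.Walk.support_eq_cons ((QR j).dropUntil v hvj)
            rw [hL] at h1
            rcases List.mem_cons.mp h1 with h2 | h2
            · exact hvS (h2 ▸ hsS)
            · have : s ∈ (((QR j).dropUntil v hvj).support).tail := by rw [hL]; exact h2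
              exact start_not_mem_dropUntil (hpR j) hvj (hs' ▸ this)
      -- glue
      have hcopy : ∀ i, tR (σ i) = sL i := hmatch
      set F : ∀ i : Fin k, Gm.Walk (a₁ i) (b₂ (σ i)) :=
        fun i => (QL i).append ((QR (σ i)).copy (hcopy i) rfl) with hF
      have hFsupp : ∀ i (v : V), v ∈ (F i).support →
          v ∈ (QL i).support ∨ v ∈ (QR (σ i)).support := by
        intro i v hv
        rw [hF, SimpleGraph.Walk.mem_support_append_iff] at hv
        rcases hv with h | h
        · exact Or.inl h
        · exact Or.inr (by rw [← SimpleGraph.Walk.support_copy ((QR (σ i))) (hcopy i) rfl]; exact h)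
      have hFpath : ∀ i, (F i).IsPath := by
        intro i
        rw [hF]
        refine isPath_append (hpL i) ?_ ?_
        · rw [SimpleGraph.Walk.isPath_copy]
          exact hpR (σ i)
        · intro v hv1 hv2
          rw [SimpleGraph.Walk.support_copy] at hv2
          exact (key i (σ i) v hv1 hv2).1
      refine ⟨a₁, fun i => b₂ (σ i), fun i => (F i).transfer G (fun e he => hGmle _ e he),
        hQ₁A, fun i => hQ₂B (σ i), ?_, ?_⟩
      · intro i
        rw [SimpleGraph.Walk.isPath_def, SimpleGraph.Walk.support_transfer]
        exact (hFpath i).support_nodup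
      · intro i j hij v hvi hvj
        rw [SimpleGraph.Walk.support_transfer] at hvi hvj
        rcases hFsupp i v hvi with h1 | h1 <;> rcases hFsupp j v hvj with h2 | h2
        · exact hQ₁d i j hij v (hsubL i v h1) (hsubL j v h2)
        · have hkey := key i (σ j) v h1 h2
          have : sL i = sL j := by rw [hkey.1.symm.trans (hkey.2.trans (hmatch j))]
          exact hij (hinjL (Subtype.ext this))
        · have hkey := key j (σ i) v h2 h1
          have : sL j = sL i := by rw [hkey.1.symm.trans (hkey.2.trans (hmatch i))]
          exact hij (hinjL (Subtype.ext this.symm))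
        · exact hQ₂d (σ i) (σ j) (fun hh => hij (hσinj hh)) v (hsubR _ v h1) (hsubR _ v h2)

/-- Delete a vertex (make `x` isolated). -/
def delV (H : SimpleGraph V) (x : V) : SimpleGraph V where
  Adj a b := H.Adj a b ∧ a ≠ x ∧ b ≠ x
  symm := ⟨by rintro a b ⟨h1, h2, h3⟩; exact ⟨h1.symm, h3, h2⟩⟩
  loopless := ⟨by rintro a ⟨h1, -⟩; exact H.loopless.irrefl a h1⟩

lemma x_not_mem_delV_walk {H : SimpleGraph V} {x : V} : ∀ {u v : V} (W : (delV H x).Walk u v),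
    u ≠ x → x ∉ W.support := by
  intro u v W
  induction W with
  | nil => intro h; simpa using fun hh => h hh.symm
  | @cons u c v h p ih =>
    intro hu hmem
    rcases (by simpa using hmem : x = u ∨ x ∈ p.support) with h1 | h1
    · exact hu h1.symm
    · exact ih h.2.2 h1

lemma delV_walk_of_walk {H : SimpleGraph V} {x : V} {u v : V} (w : H.Walk u v)
    (hx : x ∉ w.support) : ∃ w' : (delV H x).Walk u v, ∀ s ∈ w'.support, s ∈ w.support := by
  induction w with
  | nil => exact ⟨.nil, by simp⟩
  | @cons u c v h p ih =>
    have hux : u ≠ x := fun hh => hx (by simp [hh])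
    have hpx : x ∉ p.support := fun hh => hx (by simp [hh])
    have hcx : c ≠ x := fun hh => hpx (hh ▸ p.start_mem_support)
    obtain ⟨w', hw'⟩ := ih hpx
    refine ⟨.cons ⟨h, hux, hcx⟩ w', ?_⟩
    intro s hs
    rcases (List.mem_cons.mp hs : s = u ∨ s ∈ w'.support) with rfl | hs'
    · simp
    · exact List.mem_cons_of_mem _ (hw' s hs')

theorem fan_of_avoid [Fintype V] (H : SimpleGraph V) (x : V) (Y : Set V) (k : ℕ) (hxY : x ∉ Y)
    (havoid : ∀ S : Set V, x ∉ S → S.ncard < k →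
      ∃ y ∈ Y, y ∉ S ∧ ∃ w : H.Walk x y, ∀ v ∈ w.support, v ∉ S) :
    IsFan H k x Y := by
  classical
  have hMsep : ∀ S : Set V, Sep (delV H x) (H.neighborSet x) Y S → k ≤ S.ncard := by
    intro S hSep
    by_contra hlt
    push_neg at hlt
    have hS' : (S \ {x}).ncard < k :=
      lt_of_le_of_lt (Set.ncard_le_ncard diff_subset S.toFinite) hlt
    obtain ⟨y, hy, hyS, w, hw⟩ := havoid (S \ {x}) (by simp) hS'
    set p := w.toPath.1 with hp
    have hpth : p.IsPath := w.toPath.2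
    have hyx : y ≠ x := fun hh => hxY (hh ▸ hy)
    obtain ⟨c, hadj, q, hpc⟩ :=
      SimpleGraph.Walk.not_nil_iff.mp (SimpleGraph.Walk.not_nil_of_ne (Ne.symm hyx) (p := p))
    have hxq : x ∉ q.support := by
      have hnd := hpth.support_nodup
      rw [hpc] at hnd
      simpa using fun hh => ((List.nodup_cons.mp (by simpa using hnd)).1 hh)
    obtain ⟨q', hq'⟩ := delV_walk_of_walk q hxq
    obtain ⟨s, hsS, hsmem⟩ := hSep (by simpa using hadj) hy q'
    have hsq : s ∈ q.support := hq' s hsmem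
    have hsx : s ≠ x := fun hh => hxq (hh ▸ hsq)
    have hsw : s ∈ w.support := by
      apply SimpleGraph.Walk.support_toPath_subset w
      rw [← hp, hpc]
      simp [hsq]
    exact hw s hsw ⟨hsS, by simpa using hsx⟩
  obtain ⟨a, b, P, hA, hB, hPp, hPd⟩ :=
    menger ((delV H x).edgeSet.ncard) (delV H x) rfl (H.neighborSet x) Y k hMsep
  -- trim each path at its first Y-vertex
  have htrim : ∀ i : Fin k, ∃ (yi : V) (_ : yi ∈ Y) (Q : (delV H x).Walk (a i) yi),
      Q.IsPath ∧ (∀ v ∈ Q.support, v ∈ Y → v = yi) ∧ (∀ v ∈ Q.support, v ∈ (P i).support) := by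
    intro i
    obtain ⟨s, hsY, W', hint, hedges, hsupp⟩ := exists_prefix_to_set (P i)
      ⟨b i, hB i, SimpleGraph.Walk.end_mem_support _⟩
    refine ⟨s, hsY, W'.toPath.1, W'.toPath.2, ?_, ?_⟩
    · intro v hv hvY
      exact hint v (SimpleGraph.Walk.support_toPath_subset _ hv) hvY
    · intro v hv
      exact hsupp v (SimpleGraph.Walk.support_toPath_subset _ hv)
  choose yf hyf Q hQp hQint hQsub using htrim
  have hax : ∀ i, a i ≠ x := fun i hh => H.loopless.irrefl x (hh ▸ (hA i) : H.Adj x x)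
  have hxQ : ∀ i, x ∉ (Q i).support := fun i => x_not_mem_delV_walk (Q i) (hax i)
  have hQedges : ∀ i, ∀ e ∈ (Q i).edges, e ∈ H.edgeSet := by
    intro i e he
    have := SimpleGraph.Walk.edges_subset_edgeSet (Q i) he
    revert this
    refine Sym2.ind (fun u v h => h.1) e
  refine ⟨yf, fun i => SimpleGraph.Walk.cons (hA i) ((Q i).transfer H (hQedges i)), ?_, hyf, ?_, ?_, ?_⟩
  · intro i j hij
    by_contra hne'
    refine hPd i j hne' (yf i) (hQsub i _ (SimpleGraph.Walk.end_mem_support _)) ?_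
    rw [hij]
    exact hQsub j _ (SimpleGraph.Walk.end_mem_support _)
  · intro i
    refine SimpleGraph.Walk.IsPath.cons ?_ ?_
    · rw [SimpleGraph.Walk.isPath_def, SimpleGraph.Walk.support_transfer]
      exact (hQp i).support_nodup
    · rw [SimpleGraph.Walk.support_transfer]
      exact hxQ i
  · intro i v hv hvx hvy
    rcases (by simpa [SimpleGraph.Walk.support_transfer] using List.mem_cons.mp hv :
        v = x ∨ v ∈ (Q i).support) with rfl | hv'
    · exact absurd rfl hvx
    · intro hvY
      exact hvy (hQint i v hv' hvY)
  · intro i j hij v hvi hvj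
    rcases (by simpa [SimpleGraph.Walk.support_transfer] using List.mem_cons.mp hvi :
        v = x ∨ v ∈ (Q i).support) with rfl | hvi'
    · rfl
    · rcases (by simpa [SimpleGraph.Walk.support_transfer] using List.mem_cons.mp hvj :
          v = x ∨ v ∈ (Q j).support) with rfl | hvj'
      · rfl
      · exact absurd (hPd i j hij v (hQsub i v hvi') (hQsub j v hvj')) not_false

end MengerAux

/-- with the same partitioned-graph set-up, if `H` is induced on the union of
`l ≥ 2` parts, `x ∈ V(H)` has degree `k` in `H`, and `Y ⊆ V(H) \ {x}` with `|Y| = k` and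
`|Y ∩ V_j| ≤ m` for every part, then there is a `k`-fan in `H` from `x` to `Y`. -/
theorem stmt_1 {V : Type*} [Fintype V] (G : SimpleGraph V)
    (p q m : ℕ) (hm : 4 ≤ m) (hp : 3 ≤ p)
    (part : V → Fin p)
    (hsize : ∀ i : Fin p, {v : V | part v = i}.ncard = q)
    (hreg : ∀ v : V, {w : V | G.Adj v w ∧ part w = part v}.ncard = m)
    (hconn : ∀ i : Fin p, IsKConnected m (G.induce {v : V | part v = i}))
    (hout : ∀ v : V, ∃ w₁ w₂ : V, w₁ ≠ w₂ ∧ G.Adj v w₁ ∧ G.Adj v w₂ ∧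
      part w₁ ≠ part v ∧ part w₂ ≠ part v ∧ part w₁ ≠ part w₂ ∧
      (∀ w : V, G.Adj v w → part w ≠ part v → w = w₁ ∨ w = w₂))
    (hcross : ∀ i j : Fin p, i ≠ j →
      {e : V × V | G.Adj e.1 e.2 ∧ part e.1 = i ∧ part e.2 = j}.ncard * (p - 1) = 2 * q ∧
      m + 2 ≤ {e : V × V | G.Adj e.1 e.2 ∧ part e.1 = i ∧ part e.2 = j}.ncard)
    (I : Finset (Fin p)) (hI : 2 ≤ I.card)
    (x : ↥{v : V | part v ∈ I}) (k : ℕ)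
    (hk : ((G.induce {v : V | part v ∈ I}).neighborSet x).ncard = k)
    (Y : Set ↥{v : V | part v ∈ I}) (hxY : x ∉ Y) (hYcard : Y.ncard = k)
    (hYpart : ∀ j ∈ I, {y : ↥{v : V | part v ∈ I} | y ∈ Y ∧ part (y : V) = j}.ncard ≤ m) :
    IsFan (G.induce {v : V | part v ∈ I}) k x Y := by
  classical
  set H := G.induce {v : V | part v ∈ I} with hH
  -- the parts, seen inside the subtype
  set Pw : Fin p → Set ↥{v : V | part v ∈ I} := fun j => {w | part (w : V) = j} with hPw
  have hxI : part (x : V) ∈ I := x.2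
  -- the outside neighbours of x that lie in I
  set Ox : Set V := {w | G.Adj (x : V) w ∧ part w ≠ part (x : V) ∧ part w ∈ I} with hOx
  have hk2 : k = m + Ox.ncard := by
    have himg : Subtype.val '' (H.neighborSet x) = {w : V | G.Adj (x : V) w ∧ part w ∈ I} := by
      ext w
      constructor
      · rintro ⟨w', hw', rfl⟩
        have : G.Adj (x : V) (w' : V) := by
          simpa [hH] using hw'
        exact ⟨this, w'.2⟩
      · rintro ⟨hadj, hwI⟩
        exact ⟨⟨w, hwI⟩, by simpa [hH] using hadj, rfl⟩
    have hdecomp : {w : V | G.Adj (x : V) w ∧ part w ∈ I} =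
        {w : V | G.Adj (x : V) w ∧ part w = part (x : V)} ∪ Ox := by
      ext w
      simp only [hOx, mem_setOf_eq, mem_union]
      constructor
      · rintro ⟨hadj, hwI⟩
        by_cases hw : part w = part (x : V)
        · exact Or.inl ⟨hadj, hw⟩
        · exact Or.inr ⟨hadj, hw, hwI⟩
      · rintro (⟨hadj, hw⟩ | ⟨hadj, hw, hwI⟩)
        · exact ⟨hadj, hw ▸ hxI⟩
        · exact ⟨hadj, hwI⟩
    have hdisj : Disjoint {w : V | G.Adj (x : V) w ∧ part w = part (x : V)} Ox := by
      rw [Set.disjoint_left]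
      rintro w ⟨hadj, hw⟩ ⟨hadj', hw', hwI⟩
      exact hw' hw
    have := Set.ncard_image_of_injective (H.neighborSet x) Subtype.val_injective
    rw [himg, hdecomp, Set.ncard_union_eq hdisj (Set.toFinite _) (Set.toFinite _), hreg] at this
    omega
  have hr2 : Ox.ncard ≤ 2 := by
    obtain ⟨w₁, w₂, h12, ha1, ha2, hp1, hp2, hpp, huniq⟩ := hout (x : V)
    have hsub : Ox ⊆ {w₁, w₂} := by
      rintro w ⟨hadj, hne, -⟩
      exact huniq w hadj hne
    calc Ox.ncard ≤ ({w₁, w₂} : Set V).ncard := Set.ncard_le_ncard hsub (Set.toFinite _)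
      _ = 2 := Set.ncard_pair h12
  -- connectivity within one part, avoiding few vertices
  have partConn : ∀ j ∈ I, ∀ D : Set ↥{v : V | part v ∈ I}, D.ncard < m →
      ∀ u v : ↥{v : V | part v ∈ I}, u ∈ Pw j → v ∈ Pw j → u ∉ D → v ∉ D →
      ∃ w : H.Walk u v, ∀ s ∈ w.support, s ∈ Pw j ∧ s ∉ D := by
    intro j hjI D hD u v huj hvj huD hvD
    set Vj : Set V := {v : V | part v = j} with hVj
    set D' : Set ↥Vj := {t | (t : V) ∈ Subtype.val '' D} with hD'
    have hD'card : D'.ncard < m := by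
      have h1 : Subtype.val '' D' ⊆ Subtype.val '' D := by
        rintro t ⟨t', ht', rfl⟩; exact ht'
      have h2 : D'.ncard = (Subtype.val '' D').ncard :=
        (Set.ncard_image_of_injective _ Subtype.val_injective).symm
      rw [h2]
      calc (Subtype.val '' D').ncard ≤ (Subtype.val '' D).ncard :=
            Set.ncard_le_ncard h1 (Set.toFinite _)
        _ = D.ncard := Set.ncard_image_of_injective _ Subtype.val_injective
        _ < m := hD
    have hCon := (hconn j).2 D' hD'card
    have hu1 : (u : V) ∈ Vj := huj
    have hv1 : (v : V) ∈ Vj := hvj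
    have huD' : (⟨(u : V), hu1⟩ : ↥Vj) ∈ D'ᶜ := by
      intro hmem
      obtain ⟨d, hd, hd2⟩ := hmem
      exact huD ((Subtype.ext hd2 : d = u) ▸ hd)
    have hvD' : (⟨(v : V), hv1⟩ : ↥Vj) ∈ D'ᶜ := by
      intro hmem
      obtain ⟨d, hd, hd2⟩ := hmem
      exact hvD ((Subtype.ext hd2 : d = v) ▸ hd)
    obtain ⟨wk⟩ := hCon.preconnected ⟨⟨(u : V), hu1⟩, huD'⟩ ⟨⟨(v : V), hv1⟩, hvD'⟩
    have hmemI : ∀ t : ↥(D'ᶜ), part ((t : ↥Vj) : V) ∈ I := by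
      intro t
      have h := (t : ↥Vj).2
      simp only [hVj, mem_setOf_eq] at h
      rw [h]; exact hjI
    let φ : ((G.induce Vj).induce D'ᶜ) →g H :=
      ⟨fun t => ⟨((t : ↥Vj) : V), hmemI t⟩, fun {a b} hadj => by simpa [hH] using hadj⟩
    have hw : H.Walk u v := (wk.map φ).copy (Subtype.ext rfl) (Subtype.ext rfl)
    refine ⟨(wk.map φ).copy (Subtype.ext rfl) (Subtype.ext rfl), ?_⟩
    intro s hs
    rw [SimpleGraph.Walk.support_copy, SimpleGraph.Walk.support_map] at hs
    obtain ⟨t, ht, rfl⟩ := List.mem_map.mp hs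
    constructor
    · have h := (t : ↥Vj).2
      simp only [hVj, mem_setOf_eq] at h
      exact h
    · intro hsD
      refine t.2 ?_
      exact ⟨φ t, hsD, rfl⟩
  -- a surviving cross edge between two parts
  have crossSurvive : ∀ j ∈ I, ∀ j' ∈ I, j ≠ j' → ∀ S : Set ↥{v : V | part v ∈ I},
      S.ncard ≤ m + 1 → ∃ u v : ↥{v : V | part v ∈ I}, H.Adj u v ∧ u ∈ Pw j ∧ v ∈ Pw j' ∧
      u ∉ S ∧ v ∉ S := by
    intro j hjI j' hj'I hne S hS
    set E := {e : V × V | G.Adj e.1 e.2 ∧ part e.1 = j ∧ part e.2 = j'} with hE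
    have hEcard : m + 2 ≤ E.ncard := (hcross j j' hne).2
    by_contra hno
    have hkill : ∀ e ∈ E, e.1 ∈ Subtype.val '' S ∨ e.2 ∈ Subtype.val '' S := by
      rintro e ⟨hadj, h1, h2⟩
      by_contra hcon
      push_neg at hcon
      have he1I : part e.1 ∈ I := h1 ▸ hjI
      have he2I : part e.2 ∈ I := h2 ▸ hj'I
      have hu : (⟨e.1, he1I⟩ : ↥{v : V | part v ∈ I}) ∉ S := fun hh => hcon.1 ⟨_, hh, rfl⟩
      have hv : (⟨e.2, he2I⟩ : ↥{v : V | part v ∈ I}) ∉ S := fun hh => hcon.2 ⟨_, hh, rfl⟩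
      exact hno ⟨⟨e.1, he1I⟩, ⟨e.2, he2I⟩, by simpa [hH] using hadj, h1, h2, hu, hv⟩
    -- at most one neighbour in a fixed other part
    have huniqnb : ∀ u w w' : V, G.Adj u w → G.Adj u w' → part w = part w' →
        part w ≠ part u → w = w' := by
      intro u w w' haw haw' hpp hpne
      obtain ⟨w₁, w₂, h12, ha1, ha2, hp1, hp2, hww, huniq⟩ := hout u
      have hpne' : part w' ≠ part u := by rw [← hpp]; exact hpne
      rcases huniq w haw hpne with h | h <;> rcases huniq w' haw' hpne' with h' | h'
      · exact h.trans h'.symm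
      · exact absurd (by rw [← h, ← h']; exact hpp) hww
      · exact absurd (by rw [← h', ← h]; exact hpp) (Ne.symm hww)
      · exact h.trans h'.symm
    set f : V × V → V := fun e => if e.1 ∈ Subtype.val '' S then e.1 else e.2 with hf
    have hmaps : ∀ e ∈ E, f e ∈ Subtype.val '' S := by
      intro e he
      rcases hkill e he with h | h
      · simp only [hf]; rw [if_pos h]; exact h
      · simp only [hf]
        split
        · assumption
        · exact h
    have hinj : Set.InjOn f E := by
      rintro e ⟨hadj, h1, h2⟩ e' ⟨hadj', h1', h2'⟩ hfe
      simp only [hf] at hfe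
      have hj12 : part e.2 ≠ part e.1 := by rw [h1, h2]; exact Ne.symm hne
      have hj12' : part e'.2 ≠ part e'.1 := by rw [h1', h2']; exact Ne.symm hne
      split at hfe <;> split at hfe
      · -- e.1 = e'.1
        have h22 : e.2 = e'.2 := by
          refine huniqnb e.1 e.2 e'.2 hadj (hfe ▸ hadj') (by rw [h2, h2']) hj12
        exact Prod.ext hfe h22
      · exact absurd (by rw [← hfe, h1] : part e'.2 = j) (by rw [h2']; exact Ne.symm hne)
      · exact absurd (by rw [hfe, h1'] : part e.2 = j) (by rw [h2]; exact Ne.symm hne)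
      · -- e.2 = e'.2
        have h11 : e.1 = e'.1 := by
          refine huniqnb e.2 e.1 e'.1 hadj.symm (hfe ▸ hadj'.symm) (by rw [h1, h1'])
            (by rw [h1, h2]; exact hne)
        exact Prod.ext h11 hfe
    have hsubf : f '' E ⊆ Subtype.val '' S := by
      rintro w ⟨e, he, rfl⟩
      exact hmaps e he
    have : E.ncard ≤ S.ncard := by
      calc E.ncard = (f '' E).ncard := (Set.ncard_image_of_injOn hinj).symm
        _ ≤ (Subtype.val '' S).ncard := Set.ncard_le_ncard hsubf (Set.toFinite _)
        _ = S.ncard := Set.ncard_image_of_injective _ Subtype.val_injective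
    omega
  -- main avoidance property
  apply MengerAux.fan_of_avoid H x Y k hxY
  intro S hxS hcard
  have hSm1 : S.ncard ≤ m + 1 := by omega
  have hPI : ∀ w : ↥{v : V | part v ∈ I}, part (w : V) ∈ I := fun w => w.2
  have hPwmem : ∀ w : ↥{v : V | part v ∈ I}, w ∈ Pw (part (w : V)) := by
    intro w; simp [hPw]
  have hYS : ∃ y ∈ Y, y ∉ S := by
    by_contra hcon
    push_neg at hcon
    have : Y.ncard ≤ S.ncard := Set.ncard_le_ncard hcon (Set.toFinite _)
    omega
  have routeSame : ∀ u v : ↥{v : V | part v ∈ I}, part (u : V) = part (v : V) →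
      (S ∩ Pw (part (u : V))).ncard < m → u ∉ S → v ∉ S →
      ∃ w : H.Walk u v, ∀ s ∈ w.support, s ∉ S ∧ part (s : V) = part (u : V) := by
    intro u v hpuv hlt huS hvS
    obtain ⟨w, hw⟩ := partConn (part (u : V)) (hPI u) (S ∩ Pw (part (u : V))) hlt u v
      (hPwmem u) (by simp [hPw, ← hpuv]) (fun hh => huS hh.1) (fun hh => hvS hh.1)
    refine ⟨w, fun s hs => ⟨fun hsS => (hw s hs).2 ⟨hsS, (hw s hs).1⟩, ?_⟩⟩
    have := (hw s hs).1
    simpa [hPw] using this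
  have routeDiff : ∀ u v : ↥{v : V | part v ∈ I}, part (u : V) ≠ part (v : V) →
      (S ∩ Pw (part (u : V))).ncard < m → (S ∩ Pw (part (v : V))).ncard < m →
      u ∉ S → v ∉ S → ∃ w : H.Walk u v,
      ∀ s ∈ w.support, s ∉ S ∧ (part (s : V) = part (u : V) ∨ part (s : V) = part (v : V)) := by
    intro u v hne hltu hltv huS hvS
    obtain ⟨u', v', hadj, hu'j, hv'j, hu'S, hv'S⟩ :=
      crossSurvive (part (u : V)) (hPI u) (part (v : V)) (hPI v) hne S hSm1
    have hu'p : part (u' : V) = part (u : V) := by simpa [hPw] using hu'j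
    have hv'p : part (v' : V) = part (v : V) := by simpa [hPw] using hv'j
    obtain ⟨w₁, hw₁⟩ := routeSame u u' hu'p.symm hltu huS hu'S
    obtain ⟨w₂, hw₂⟩ := routeSame v' v hv'p (by rw [hv'p]; exact hltv) hv'S hvS
    refine ⟨w₁.append (SimpleGraph.Walk.cons hadj w₂), ?_⟩
    intro s hs
    rw [SimpleGraph.Walk.mem_support_append_iff] at hs
    rcases hs with h1 | h1
    · exact ⟨(hw₁ s h1).1, Or.inl (hw₁ s h1).2⟩
    · rcases (by simpa using h1 : s = u' ∨ s ∈ w₂.support) with rfl | h2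
      · exact ⟨hu'S, Or.inl hu'p⟩
      · exact ⟨(hw₂ s h2).1, Or.inr ((hw₂ s h2).2.trans hv'p)⟩
  by_cases hbig : ∃ b ∈ I, m ≤ (S ∩ Pw b).ncard
  · obtain ⟨b, hbI, hsb⟩ := hbig
    have hUdec : (S \ Pw b) ∪ (S ∩ Pw b) = S := Set.diff_union_inter S (Pw b)
    have hUdisj : Disjoint (S \ Pw b) (S ∩ Pw b) := by
      rw [Set.disjoint_left]
      rintro s ⟨hs1, hs2⟩ ⟨hs3, hs4⟩
      exact hs2 hs4
    have hUcard : (S \ Pw b).ncard + (S ∩ Pw b).ncard = S.ncard := by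
      rw [← Set.ncard_union_eq hUdisj (Set.toFinite _) (Set.toFinite _), hUdec]
    have hrest1 : (S \ Pw b).ncard + m ≤ S.ncard := by omega
    have hsmall' : ∀ j, j ≠ b → (S ∩ Pw j).ncard < m := by
      intro j hjb
      have hsub : S ∩ Pw j ⊆ S \ Pw b := by
        rintro s ⟨hs1, hs2⟩
        refine ⟨hs1, fun hs3 => hjb ?_⟩
        simp only [hPw, mem_setOf_eq] at hs2 hs3
        rw [← hs2, hs3]
      have := Set.ncard_le_ncard hsub (Set.toFinite _)
      omega
    have routeRest : ∀ u v : ↥{v : V | part v ∈ I}, part (u : V) ≠ b → part (v : V) ≠ b →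
        u ∉ S → v ∉ S → ∃ w : H.Walk u v, ∀ s ∈ w.support, s ∉ S := by
      intro u v hub hvb huS hvS
      by_cases hpuv : part (u : V) = part (v : V)
      · obtain ⟨w, hw⟩ := routeSame u v hpuv (hsmall' _ hub) huS hvS
        exact ⟨w, fun s hs => (hw s hs).1⟩
      · obtain ⟨w, hw⟩ := routeDiff u v hpuv (hsmall' _ hub) (hsmall' _ hvb) huS hvS
        exact ⟨w, fun s hs => (hw s hs).1⟩
    by_cases hyout : ∃ y ∈ Y, y ∉ S ∧ part (y : V) ≠ b
    · obtain ⟨y, hy, hyS, hyb⟩ := hyout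
      by_cases hxb : part (x : V) = b
      · have hOxS : ∃ w ∈ Ox, w ∉ Subtype.val '' S := by
          by_contra hcon
          push_neg at hcon
          have hsub : Ox ⊆ Subtype.val '' (S \ Pw b) := by
            intro w hw
            obtain ⟨s', hs', rfl⟩ := hcon w hw
            refine ⟨s', ⟨hs', fun hPb => hw.2.1 ?_⟩, rfl⟩
            simp only [hPw, mem_setOf_eq] at hPb
            rw [hPb, hxb]
          have hle := Set.ncard_le_ncard hsub (Set.toFinite _)
          rw [Set.ncard_image_of_injective _ Subtype.val_injective] at hle
          omega
        obtain ⟨wv, hwOx, hwS⟩ := hOxS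
        have hw'S : (⟨wv, hwOx.2.2⟩ : ↥{v : V | part v ∈ I}) ∉ S := fun hh => hwS ⟨_, hh, rfl⟩
        have hw'b : part wv ≠ b := by rw [← hxb]; exact hwOx.2.1
        obtain ⟨wk, hwk⟩ := routeRest ⟨wv, hwOx.2.2⟩ y hw'b hyb hw'S hyS
        have hadj : H.Adj x ⟨wv, hwOx.2.2⟩ := by simpa [hH] using hwOx.1
        refine ⟨y, hy, hyS, SimpleGraph.Walk.cons hadj wk, ?_⟩
        intro v hv
        rcases (by simpa using hv : v = x ∨ v ∈ wk.support) with rfl | hv'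
        · exact hxS
        · exact hwk v hv'
      · obtain ⟨wk, hwk⟩ := routeRest x y hxb hyb hxS hyS
        exact ⟨y, hy, hyS, wk, hwk⟩
    · exfalso
      push_neg at hyout
      have hsubY : Y \ Pw b ⊆ S \ Pw b := by
        rintro y ⟨hyY, hyPb⟩
        by_cases hyS : y ∈ S
        · exact ⟨hyS, hyPb⟩
        · refine absurd ?_ hyPb
          have := hyout y hyY hyS
          simpa [hPw] using this
      have h1 : (Y \ Pw b).ncard ≤ (S \ Pw b).ncard := Set.ncard_le_ncard hsubY (Set.toFinite _)
      have h2 : (Y ∩ Pw b).ncard ≤ m := by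
        have heq : Y ∩ Pw b = {y : ↥{v : V | part v ∈ I} | y ∈ Y ∧ part (y : V) = b} := by
          ext y; simp [hPw]
        rw [heq]
        exact hYpart b hbI
      have h3 : (Y \ Pw b).ncard + (Y ∩ Pw b).ncard = Y.ncard := by
        have hdec : (Y \ Pw b) ∪ (Y ∩ Pw b) = Y := Set.diff_union_inter Y (Pw b)
        have hdisj : Disjoint (Y \ Pw b) (Y ∩ Pw b) := by
          rw [Set.disjoint_left]
          rintro s ⟨hs1, hs2⟩ ⟨hs3, hs4⟩
          exact hs2 hs4
        rw [← Set.ncard_union_eq hdisj (Set.toFinite _) (Set.toFinite _), hdec]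
      omega
  · push_neg at hbig
    obtain ⟨y, hy, hyS⟩ := hYS
    by_cases hpy : part (y : V) = part (x : V)
    · obtain ⟨w, hw⟩ := routeSame x y hpy.symm (hbig _ hxI) hxS hyS
      exact ⟨y, hy, hyS, w, fun v hv => (hw v hv).1⟩
    · obtain ⟨w, hw⟩ := routeDiff x y (fun hh => hpy hh.symm) (hbig _ hxI) (hbig _ (hPI y))
        hxS hyS
      exact ⟨y, hy, hyS, w, fun v hv => (hw v hv).1⟩
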